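/- The maps 𝔤_k converge uniformly on Y (as k → ∞) to a map 𝔤 : Y → ℂ which satisfies 𝔤(𝓕(s,t)) = E_κ(𝔤(s,t)) for all (s,t) ∈ Y, together with the asymptotic estimate |𝔤(s,t) − (Log(Z(𝓕(s,t))) + 2πi·s₁)| ≤ e^{−t}·(2K + 2π + 4) for all (s,t) ∈ Y. -/

import Mathlib

open Filter Topology ENNReal

noncomputable section

/-- The space of external addresses: integer sequences (indexed from 0, so index `k`
corresponds to the entry `s_{k+1}` of the paper) with the lexicographic order. -/
abbrev Addr : Type := Lex (ℕ → ℤ)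

/-- The shift map `σ` on external addresses. -/
def shiftA (s : Addr) : Addr := toLex (fun n => ofLex s (n + 1))

/-- The model growth function `F(t) = e^t - 1`. -/
def Fexp (t : ℝ) : ℝ := Real.exp t - 1

/-- The model map `𝓕(s,t) = (σ s, F t - 2π |s₂|)`. -/
def Fmod (p : Addr × ℝ) : Addr × ℝ :=
  (shiftA p.1, Fexp p.2 - 2 * Real.pi * |((ofLex p.1 1 : ℤ) : ℝ)|)

/-- The model set `X̄ = {(s,t) : T(𝓕ⁿ(s,t)) ≥ 0 for all n ≥ 0}`. -/
def Xbar : Set (Addr × ℝ) := {p | ∀ n : ℕ, 0 ≤ (Fmod^[n] p).2}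

/-- The model escaping set `X = {(s,t) ∈ X̄ : T(𝓕ⁿ(s,t)) → ∞}`. -/
def Xset : Set (Addr × ℝ) :=
  {p | p ∈ Xbar ∧ Tendsto (fun n : ℕ => (Fmod^[n] p).2) atTop atTop}

/-- The minimal potential `t_s ∈ [0,∞]` of an address (`∞` if `(s,t) ∉ X̄` for all `t ≥ 0`). -/
def tS (s : Addr) : ℝ≥0∞ :=
  sInf (ENNReal.ofReal '' {t : ℝ | 0 ≤ t ∧ (s, t) ∈ Xbar})

/-- The exponential map `E_κ(z) = e^z + κ`. -/
def Eexp (κ : ℂ) (z : ℂ) : ℂ := Complex.exp z + κ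

/-- The escaping set `I(E_κ)`. -/
def escapingSet (κ : ℂ) : Set ℂ :=
  {z | Tendsto (fun n : ℕ => ‖(Eexp κ)^[n] z‖) atTop atTop}

/-- The order topology induced by the lexicographic order on external addresses. -/
instance : TopologicalSpace Addr := Preorder.topology Addr
instance : OrderTopology Addr := ⟨rfl⟩

/-- The constant `Q(K) = max(log(4(K+π+3)), π+2)`. -/
def Qconst (K : ℝ) : ℝ := max (Real.log (4 * (K + Real.pi + 3))) (Real.pi + 2)

/-- `Y_Q = {(s,t) ∈ X̄ : T(𝓕ⁿ(s,t)) ≥ Q for all n}`. -/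
def Yset (Q : ℝ) : Set (Addr × ℝ) :=
  {p | p ∈ Xbar ∧ ∀ n : ℕ, Q ≤ (Fmod^[n] p).2}

/-- `Z(s,t) = t + 2πi s₁`. -/
def Zc (p : Addr × ℝ) : ℂ :=
  (p.2 : ℂ) + 2 * Real.pi * Complex.I * ((ofLex p.1 0 : ℤ) : ℂ)

/-- The approximating maps `𝔤_k`: `𝔤₀ = Z` and
`𝔤_{k+1}(s,t) = Log(𝔤_k(𝓕(s,t)) - κ) + 2πi s₁`, with `Log` the principal logarithm. -/
def gmap (κ : ℂ) : ℕ → Addr × ℝ → ℂ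
  | 0 => Zc
  | k + 1 => fun p =>
      Complex.log (gmap κ k (Fmod p) - κ) + 2 * Real.pi * Complex.I * ((ofLex p.1 0 : ℤ) : ℂ)

private lemma yset_shift {Q : ℝ} {p : Addr × ℝ} (hp : p ∈ Yset Q) : Fmod p ∈ Yset Q := by
  refine ⟨fun n => ?_, fun n => ?_⟩
  · rw [← Function.iterate_succ_apply]; exact hp.1 (n + 1)
  · rw [← Function.iterate_succ_apply]; exact hp.2 (n + 1)

private lemma qfacts {K t : ℝ} (hK : 2 * Real.pi + 6 < K) (ht : Qconst K ≤ t) :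
    18 ≤ K + Real.pi + 3 ∧ 4 * (K + Real.pi + 3) ≤ Real.exp t ∧ Real.pi + 2 ≤ t := by
  have hpi := Real.pi_gt_three
  have h1 : (18:ℝ) ≤ K + Real.pi + 3 := by nlinarith
  have hpos : (0:ℝ) < 4 * (K + Real.pi + 3) := by nlinarith
  have h2 : 4 * (K + Real.pi + 3) ≤ Real.exp t := by
    calc 4 * (K + Real.pi + 3) = Real.exp (Real.log (4 * (K + Real.pi + 3))) :=
          (Real.exp_log hpos).symm
      _ ≤ Real.exp t := Real.exp_le_exp.mpr (le_trans (le_max_left _ _) ht)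
  exact ⟨h1, h2, le_trans (le_max_right _ _) ht⟩

private lemma level_facts (K : ℝ) {p : Addr × ℝ} (hp : p ∈ Yset (Qconst K)) :
    Qconst K ≤ p.2 ∧ Qconst K ≤ (Fmod p).2 ∧
    (Fmod p).2 + 2 * Real.pi * |((ofLex p.1 1 : ℤ) : ℝ)| = Real.exp p.2 - 1 ∧
    (Zc (Fmod p)).re = (Fmod p).2 ∧
    |(Zc (Fmod p)).im| = 2 * Real.pi * |((ofLex p.1 1 : ℤ) : ℝ)| := by
  have hZre : ∀ q : Addr × ℝ, (Zc q).re = q.2 := by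
    intro q; simp [Zc]
  have hZim : ∀ q : Addr × ℝ, (Zc q).im = 2 * Real.pi * ((ofLex q.1 0 : ℤ) : ℝ) := by
    intro q; simp [Zc]
  have hsh : (ofLex (Fmod p).1 0 : ℤ) = ofLex p.1 1 := rfl
  refine ⟨by simpa using hp.2 0, by simpa using hp.2 1, ?_, hZre _, ?_⟩
  · show (Fexp p.2 - 2 * Real.pi * |((ofLex p.1 1 : ℤ) : ℝ)|) + _ = _
    simp [Fexp]
  · rw [hZim, hsh, abs_mul]
    have : |2 * Real.pi| = 2 * Real.pi := abs_of_pos (by positivity)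
    rw [this]


set_option maxHeartbeats 2000000 in
private lemma core (K : ℝ) (hK : 2 * Real.pi + 6 < K) {t t' b : ℝ} {Z' : ℂ}
    (ht : Qconst K ≤ t) (ht' : Qconst K ≤ t')
    (hsum : t' + b = Real.exp t - 1) (hre : Z'.re = t') (him : |Z'.im| = b) :
    (∀ z : ℂ, ‖z - Z'‖ ≤ K + Real.pi + 2 →
        z ∈ Complex.slitPlane ∧ Real.exp t / 4 ≤ ‖z‖ ∧ ‖z‖ ≤ 2 * Real.exp t) ∧
    (∀ w : ℂ, ‖w - Z'‖ ≤ K + Real.pi + 2 →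
        ‖Complex.log w - (t : ℂ)‖ ≤ Real.pi + 2) ∧
    (∀ w₀ w₁ : ℂ, ‖w₀ - Z'‖ ≤ K + Real.pi + 2 → ‖w₁ - Z'‖ ≤ K + Real.pi + 2 →
        ‖Complex.log w₁ - Complex.log w₀‖ ≤ 4 / Real.exp t * ‖w₁ - w₀‖) ∧
    (∀ w : ℂ, ‖w - Z'‖ ≤ K + Real.pi + 2 →
        ‖Complex.log w - Complex.log Z'‖ ≤ Real.exp (-t) * (2 * K + 2 * Real.pi + 4)) := by
  obtain ⟨hM, hE, htpi⟩ := qfacts hK ht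
  have hpi := Real.pi_gt_three
  set E := Real.exp t with hEdef
  have hEpos : 0 < E := Real.exp_pos t
  have hE72 : (72:ℝ) ≤ E := by nlinarith
  have hb : 0 ≤ b := him ▸ abs_nonneg _
  have ht'pi : Real.pi + 2 ≤ t' := le_trans (le_max_right _ _) ht'
  have ht'0 : 0 < t' := by nlinarith
  -- |Z'| bounds
  have hZsq : (E - 1)^2 ≤ 2 * ‖Z'‖^2 := by
    have h1 : ‖Z'‖^2 = t' * t' + Z'.im * Z'.im := by
      rw [Complex.sq_norm, Complex.normSq_apply, hre]
    have h2 : Z'.im * Z'.im = b * b := by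
      rw [← abs_mul_abs_self Z'.im, him]
    rw [← hsum]
    nlinarith [sq_nonneg (t' - b)]
  have hZub : ‖Z'‖ ≤ E - 1 := by
    have h3 := Complex.norm_le_abs_re_add_abs_im Z'
    rw [hre, him, abs_of_pos ht'0] at h3
    linarith
  have hZ0 : 0 ≤ ‖Z'‖ := norm_nonneg _
  have hZlb : E/2 - 1 ≤ ‖Z'‖ := by
    nlinarith [sq_nonneg (‖Z'‖ - (E/2 - 1)), sq_nonneg (‖Z'‖ + (E/2 - 1))]
  have hZpos : 0 < ‖Z'‖ := by nlinarith
  -- disk facts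
  have hdisk : ∀ z : ℂ, ‖z - Z'‖ ≤ K + Real.pi + 2 →
      z ∈ Complex.slitPlane ∧ Real.exp t / 4 ≤ ‖z‖ ∧ ‖z‖ ≤ 2 * Real.exp t := by
    intro z hz
    have hz1 : ‖Z'‖ - (K + Real.pi + 2) ≤ ‖z‖ := by
      have h4 := norm_sub_norm_le Z' z
      rw [norm_sub_rev] at h4
      linarith
    have hz2 : ‖z‖ ≤ ‖Z'‖ + (K + Real.pi + 2) := by
      calc ‖z‖ = ‖(z - Z') + Z'‖ := by ring_nf
        _ ≤ ‖z - Z'‖ + ‖Z'‖ := norm_add_le _ _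
        _ ≤ ‖Z'‖ + (K + Real.pi + 2) := by linarith
    refine ⟨?_, by nlinarith, by nlinarith⟩
    by_cases hc : K + Real.pi + 3 ≤ t'
    · left
      have h5 : |(z - Z').re| ≤ ‖z - Z'‖ := by
        exact Complex.abs_re_le_norm _
      rw [Complex.sub_re, hre] at h5
      have h6 := (abs_le.mp (le_trans h5 hz)).1
      linarith
    · right
      push_neg at hc
      have hbig : 3 * (K + Real.pi + 3) - 1 ≤ b := by nlinarith
      have h5 : |(Z' - z).im| ≤ ‖Z' - z‖ := by
        exact Complex.abs_im_le_norm _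
      rw [norm_sub_rev] at h5
      have h6 : |Z'.im| - |z.im| ≤ |(Z' - z).im| := by
        rw [Complex.sub_im]; exact abs_sub_abs_le_abs_sub _ _
      have h7 : 0 < |z.im| := by
        rw [him] at h6; nlinarith
      exact fun h0 => by rw [h0] at h7; simp at h7
  refine ⟨hdisk, ?_, ?_, ?_⟩
  · -- step bound
    intro w hw
    obtain ⟨hslit, hlb, hub⟩ := hdisk w hw
    have hwpos : 0 < ‖w‖ := by nlinarith
    have hexp2 : (4:ℝ) ≤ Real.exp 2 := by
      have h21 : Real.exp 2 = Real.exp 1 * Real.exp 1 := by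
        rw [← Real.exp_add]; norm_num
      nlinarith [Real.exp_one_gt_d9]
    have hlog4 : Real.log 4 ≤ 2 := (Real.log_le_iff_le_exp (by norm_num)).mpr hexp2
    have hlog2 : Real.log 2 ≤ 2 := by
      have := Real.log_le_log (by norm_num) (show (2:ℝ) ≤ 4 by norm_num)
      linarith
    have hrebound : |Real.log ‖w‖ - t| ≤ 2 := by
      rw [abs_le]
      constructor
      · have h8 : Real.log (E/4) ≤ Real.log ‖w‖ := Real.log_le_log (by positivity) hlb
        rw [Real.log_div (ne_of_gt hEpos) (by norm_num), Real.log_exp] at h8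
        linarith
      · have h8 : Real.log ‖w‖ ≤ Real.log (2*E) := Real.log_le_log hwpos hub
        rw [Real.log_mul (by norm_num) (ne_of_gt hEpos), Real.log_exp] at h8
        linarith
    have h9 : ‖Complex.log w - (t:ℂ)‖ ≤ |(Complex.log w - (t:ℂ)).re| + |(Complex.log w - (t:ℂ)).im| := by
      exact Complex.norm_le_abs_re_add_abs_im _
    have h10 : (Complex.log w - (t:ℂ)).re = Real.log ‖w‖ - t := by
      rw [Complex.sub_re, Complex.log_re, Complex.ofReal_re]
    have h11 : (Complex.log w - (t:ℂ)).im = Complex.arg w := by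
      rw [Complex.sub_im, Complex.log_im, Complex.ofReal_im, sub_zero]
    rw [h10, h11] at h9
    have h12 := Complex.abs_arg_le_pi w
    linarith
  · -- Lipschitz
    intro w₀ w₁ h₀ h₁
    have hder : ∀ z ∈ Metric.closedBall Z' (K + Real.pi + 2),
        HasDerivWithinAt Complex.log z⁻¹ (Metric.closedBall Z' (K + Real.pi + 2)) z := by
      intro z hz
      rw [Metric.mem_closedBall, dist_eq_norm] at hz
      exact (Complex.hasDerivAt_log (hdisk z hz).1).hasDerivWithinAt
    have hbound : ∀ z ∈ Metric.closedBall Z' (K + Real.pi + 2), ‖(z : ℂ)⁻¹‖ ≤ 4 / E := by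
      intro z hz
      rw [Metric.mem_closedBall, dist_eq_norm] at hz
      have h5 := (hdisk z hz).2.1
      rw [norm_inv]
      have h6 : (0:ℝ) < E/4 := by positivity
      calc ‖z‖⁻¹ ≤ (E/4)⁻¹ := by
            apply inv_anti₀ h6 h5
        _ = 4 / E := by rw [inv_div]
    have hmem₀ : w₀ ∈ Metric.closedBall Z' (K + Real.pi + 2) := by
      rw [Metric.mem_closedBall, dist_eq_norm]; exact h₀
    have hmem₁ : w₁ ∈ Metric.closedBall Z' (K + Real.pi + 2) := by
      rw [Metric.mem_closedBall, dist_eq_norm]; exact h₁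
    exact Convex.norm_image_sub_le_of_norm_hasDerivWithin_le hder hbound
      (convex_closedBall _ _) hmem₀ hmem₁
  · -- final bound
    intro w hw
    have hZne : Z' ≠ 0 := by
      intro h0; rw [h0] at hZpos; simp at hZpos
    set v : ℂ := w / Z' - 1 with hv
    have hw_eq : w = Z' * (1 + v) := by
      rw [hv]; field_simp; ring
    have hveq : v = (w - Z') / Z' := by
      rw [hv, div_sub_one hZne]
    have hvnorm : ‖v‖ = ‖w - Z'‖ / ‖Z'‖ := by
      rw [hveq, norm_div]
    have hKpos : (0:ℝ) < K + Real.pi + 2 := by nlinarith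
    have h5 : 5 * (K + Real.pi + 2) ≤ 2 * ‖Z'‖ := by
      nlinarith [sq_nonneg (2 * ‖Z'‖ - 5 * (K + Real.pi + 2)),
        sq_nonneg (2 * ‖Z'‖ + 5 * (K + Real.pi + 2)), sq_nonneg (E - 4 * (K + Real.pi + 3))]
    have hv25 : ‖v‖ ≤ 2/5 := by
      rw [hvnorm, div_le_iff₀ hZpos]
      nlinarith
    have hv0 : 0 ≤ ‖v‖ := norm_nonneg _
    have h1v_re : 0 < (1 + v).re := by
      have h6 : |v.re| ≤ ‖v‖ := by
        exact Complex.abs_re_le_norm _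
      have h7 := (abs_le.mp h6).1
      simp only [Complex.add_re, Complex.one_re]
      linarith
    have h1v_ne : (1 : ℂ) + v ≠ 0 := by
      intro h0; rw [h0] at h1v_re; simp at h1v_re
    have hargZ : |Complex.arg Z'| < Real.pi / 2 :=
      Complex.abs_arg_lt_pi_div_two_iff.mpr (Or.inl (by rw [hre]; exact ht'0))
    have hargv : |Complex.arg (1 + v)| < Real.pi / 2 :=
      Complex.abs_arg_lt_pi_div_two_iff.mpr (Or.inl h1v_re)
    have hlogmul : Complex.log w = Complex.log Z' + Complex.log (1 + v) := by
      rw [hw_eq]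
      refine Complex.log_mul hZne h1v_ne ?_
      obtain ⟨ha1, ha2⟩ := abs_lt.mp hargZ
      obtain ⟨hb1, hb2⟩ := abs_lt.mp hargv
      constructor
      · linarith
      · linarith
    have hkey : Complex.log w - Complex.log Z' = Complex.log (1 + v) := by
      rw [hlogmul]; ring
    rw [hkey]
    have hv1 : ‖v‖ < 1 := by linarith
    have hlog1v := Complex.norm_log_one_add_le hv1
    have hinv : (1 - ‖v‖)⁻¹ ≤ (3/5 : ℝ)⁻¹ := by
      apply inv_anti₀ (by norm_num) (by linarith)
    have h13 : ‖Complex.log (1 + v)‖ ≤ 4/3 * ‖v‖ := by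
      have : ‖v‖^2 * (1 - ‖v‖)⁻¹ / 2 ≤ ‖v‖ / 3 := by
        nlinarith [sq_nonneg ‖v‖]
      linarith
    have hr2 : 2 * E ≤ 3 * ‖Z'‖ := by
      nlinarith [sq_nonneg (3 * ‖Z'‖ - 2 * E), sq_nonneg (E - 72)]
    calc ‖Complex.log (1 + v)‖ ≤ 4/3 * ‖v‖ := h13
      _ = 4 * ‖w - Z'‖ / (3 * ‖Z'‖) := by rw [hvnorm]; ring
      _ ≤ Real.exp (-t) * (2 * K + 2 * Real.pi + 4) := by
          rw [Real.exp_neg, ← hEdef, inv_mul_eq_div, div_le_div_iff₀ (by positivity) hEpos]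
          nlinarith [mul_le_mul_of_nonneg_right hw hEpos.le,
            mul_le_mul_of_nonneg_left hr2 hKpos.le]


private lemma claimA (κ : ℂ) (K : ℝ) (hK : 2 * Real.pi + 6 < K) (hκ : ‖κ‖ ≤ K) :
    ∀ k, ∀ p ∈ Yset (Qconst K), ‖gmap κ k p - Zc p‖ ≤ Real.pi + 2 := by
  intro k
  induction k with
  | zero =>
    intro p hp
    have : gmap κ 0 p - Zc p = 0 := by simp [gmap]
    rw [this, norm_zero]
    positivity
  | succ k ih =>
    intro p hp
    obtain ⟨ht, ht', hsum, hre, him⟩ := level_facts K hp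
    obtain ⟨hdisk, hstep, hlip, hfin⟩ := core K hK ht ht' hsum hre him
    have hw : ‖(gmap κ k (Fmod p) - κ) - Zc (Fmod p)‖ ≤ K + Real.pi + 2 := by
      have h1 := ih (Fmod p) (yset_shift hp)
      calc ‖(gmap κ k (Fmod p) - κ) - Zc (Fmod p)‖
          = ‖(gmap κ k (Fmod p) - Zc (Fmod p)) + (-κ)‖ := by ring_nf
        _ ≤ ‖gmap κ k (Fmod p) - Zc (Fmod p)‖ + ‖(-κ)‖ := norm_add_le _ _
        _ ≤ (Real.pi + 2) + K := by
            rw [norm_neg]; exact add_le_add h1 hκ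
        _ = K + Real.pi + 2 := by ring
    have h3 : gmap κ (k+1) p - Zc p = Complex.log (gmap κ k (Fmod p) - κ) - (p.2 : ℂ) := by
      simp only [gmap, Zc]; ring
    rw [h3]
    exact hstep _ hw

private lemma keybound (κ : ℂ) (K : ℝ) (hK : 2 * Real.pi + 6 < K) (hκ : ‖κ‖ ≤ K) :
    ∀ k, ∀ p ∈ Yset (Qconst K),
      ‖gmap κ (k+1) p - gmap κ k p‖ ≤ (2 * Real.pi + 4) * (1/2)^k := by
  intro k
  induction k with
  | zero =>
    intro p hp
    have h1 := claimA κ K hK hκ 1 p hp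
    have h2 : gmap κ 0 p = Zc p := rfl
    calc ‖gmap κ 1 p - gmap κ 0 p‖ = ‖gmap κ 1 p - Zc p‖ := by rw [h2]
      _ ≤ Real.pi + 2 := h1
      _ ≤ (2 * Real.pi + 4) * (1/2)^0 := by
          have := Real.pi_pos; simp; linarith
  | succ k ih =>
    intro p hp
    obtain ⟨ht, ht', hsum, hre, him⟩ := level_facts K hp
    obtain ⟨hdisk, hstep, hlip, hfin⟩ := core K hK ht ht' hsum hre him
    obtain ⟨hM, hE, htpi⟩ := qfacts hK ht
    have hq := yset_shift hp
    have hwk : ∀ j, ‖(gmap κ j (Fmod p) - κ) - Zc (Fmod p)‖ ≤ K + Real.pi + 2 := by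
      intro j
      have h1 := claimA κ K hK hκ j (Fmod p) hq
      calc ‖(gmap κ j (Fmod p) - κ) - Zc (Fmod p)‖
          = ‖(gmap κ j (Fmod p) - Zc (Fmod p)) + (-κ)‖ := by ring_nf
        _ ≤ ‖gmap κ j (Fmod p) - Zc (Fmod p)‖ + ‖(-κ)‖ := norm_add_le _ _
        _ ≤ (Real.pi + 2) + K := by
            rw [norm_neg]; exact add_le_add h1 hκ
        _ = K + Real.pi + 2 := by ring
    have h5 := hlip _ _ (hwk k) (hwk (k+1))
    have h3 : gmap κ (k+2) p - gmap κ (k+1) p =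
        Complex.log (gmap κ (k+1) (Fmod p) - κ) - Complex.log (gmap κ k (Fmod p) - κ) := by
      simp only [gmap]; ring
    have h4 : (gmap κ (k+1) (Fmod p) - κ) - (gmap κ k (Fmod p) - κ)
        = gmap κ (k+1) (Fmod p) - gmap κ k (Fmod p) := by ring
    rw [h4] at h5
    have hEb : 4 / Real.exp p.2 ≤ 1/2 := by
      rw [div_le_iff₀ (Real.exp_pos _)]
      nlinarith [Real.pi_gt_three]
    have hpos : (0:ℝ) ≤ (2 * Real.pi + 4) * (1/2)^k := by positivity
    calc ‖gmap κ (k+2) p - gmap κ (k+1) p‖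
        ≤ 4 / Real.exp p.2 * ‖gmap κ (k+1) (Fmod p) - gmap κ k (Fmod p)‖ := by rw [h3]; exact h5
      _ ≤ (1/2) * ((2 * Real.pi + 4) * (1/2)^k) := by
          apply mul_le_mul hEb (ih (Fmod p) hq) (norm_nonneg _) (by norm_num)
      _ = (2 * Real.pi + 4) * (1/2)^(k+1) := by ring

private lemma wk_in_disk (κ : ℂ) (K : ℝ) (hK : 2 * Real.pi + 6 < K) (hκ : ‖κ‖ ≤ K)
    {p : Addr × ℝ} (hp : p ∈ Yset (Qconst K)) (j : ℕ) :
    ‖(gmap κ j (Fmod p) - κ) - Zc (Fmod p)‖ ≤ K + Real.pi + 2 := by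
  have h1 := claimA κ K hK hκ j (Fmod p) (yset_shift hp)
  calc ‖(gmap κ j (Fmod p) - κ) - Zc (Fmod p)‖
      = ‖(gmap κ j (Fmod p) - Zc (Fmod p)) + (-κ)‖ := by ring_nf
    _ ≤ ‖gmap κ j (Fmod p) - Zc (Fmod p)‖ + ‖(-κ)‖ := norm_add_le _ _
    _ ≤ (Real.pi + 2) + K := by
        rw [norm_neg]; exact add_le_add h1 hκ
    _ = K + Real.pi + 2 := by ring

/-- **Convergence to a conjugacy** (Theorem 4.2, first part): on `Y` the maps `𝔤_k`
converge uniformly to a map `𝔤` with `𝔤 ∘ 𝓕 = E_κ ∘ 𝔤` on `Y` and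
`|𝔤(s,t) - (Log(Z(𝓕(s,t))) + 2πi s₁)| ≤ e^{-t} (2K + 2π + 4)`. -/
theorem gmap_uniform_convergence (κ : ℂ) (K : ℝ) (hK : 2 * Real.pi + 6 < K)
    (hκ : ‖κ‖ ≤ K) :
    ∃ g : Addr × ℝ → ℂ,
      TendstoUniformlyOn (gmap κ) g atTop (Yset (Qconst K)) ∧
      (∀ p ∈ Yset (Qconst K), g (Fmod p) = Eexp κ (g p)) ∧
      (∀ p ∈ Yset (Qconst K),
        ‖g p - (Complex.log (Zc (Fmod p)) +
            2 * Real.pi * Complex.I * ((ofLex p.1 0 : ℤ) : ℂ))‖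
          ≤ Real.exp (-p.2) * (2 * K + 2 * Real.pi + 4)) := by
  have hgeo : ∀ p ∈ Yset (Qconst K), ∀ n : ℕ,
      dist (gmap κ n p) (gmap κ (n+1) p) ≤ (2 * Real.pi + 4) * (1/2)^n := by
    intro p hp n
    rw [dist_eq_norm, norm_sub_rev]
    exact keybound κ K hK hκ n p hp
  have hCauchy : ∀ p ∈ Yset (Qconst K), CauchySeq (fun k => gmap κ k p) :=
    fun p hp => cauchySeq_of_le_geometric (1/2) (2 * Real.pi + 4) (by norm_num) (hgeo p hp)
  set g : Addr × ℝ → ℂ := fun p => limUnder atTop (fun k => gmap κ k p) with hg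
  have hpt : ∀ p ∈ Yset (Qconst K), Tendsto (fun k => gmap κ k p) atTop (𝓝 (g p)) :=
    fun p hp => (hCauchy p hp).tendsto_limUnder
  have hdist : ∀ p ∈ Yset (Qconst K), ∀ n : ℕ,
      dist (gmap κ n p) (g p) ≤ (2 * Real.pi + 4) * (1/2)^n / (1 - 1/2) :=
    fun p hp n => dist_le_of_le_geometric_of_tendsto (1/2) (2 * Real.pi + 4)
      (by norm_num) (hgeo p hp) (hpt p hp) n
  refine ⟨g, ?_, ?_, ?_⟩
  · rw [Metric.tendstoUniformlyOn_iff]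
    intro ε hε
    have hlim : Tendsto (fun n : ℕ => (2 * Real.pi + 4) * (1/2)^n / (1 - 1/2)) atTop (𝓝 0) := by
      have h0 : Tendsto (fun n : ℕ => ((1:ℝ)/2)^n) atTop (𝓝 0) :=
        tendsto_pow_atTop_nhds_zero_of_lt_one (by norm_num) (by norm_num)
      have h1 := (h0.const_mul (2 * Real.pi + 4)).div_const (1 - 1/2)
      simpa using h1
    filter_upwards [hlim.eventually (gt_mem_nhds hε)] with n hn p hp
    calc dist (g p) (gmap κ n p) = dist (gmap κ n p) (g p) := dist_comm _ _
      _ ≤ (2 * Real.pi + 4) * (1/2)^n / (1 - 1/2) := hdist p hp n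
      _ < ε := hn
  · intro p hp
    have hq := yset_shift hp
    have hrel : ∀ k, gmap κ k (Fmod p) = Eexp κ (gmap κ (k+1) p) := by
      intro k
      obtain ⟨ht, ht', hsum, hre, him⟩ := level_facts K hp
      obtain ⟨hdisk, _, _, _⟩ := core K hK ht ht' hsum hre him
      have hwk := wk_in_disk κ K hK hκ hp k
      have hw0 : gmap κ k (Fmod p) - κ ≠ 0 := by
        intro h0
        have h1 := (hdisk _ hwk).2.1
        rw [h0, norm_zero] at h1
        nlinarith [Real.exp_pos p.2]
      have hexp1 : Complex.exp (2 * (Real.pi:ℂ) * Complex.I * ((ofLex p.1 0 : ℤ) : ℂ)) = 1 := by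
        rw [show (2 * (Real.pi:ℂ) * Complex.I * ((ofLex p.1 0 : ℤ) : ℂ))
            = ((ofLex p.1 0 : ℤ) : ℂ) * (2 * (Real.pi:ℂ) * Complex.I) by ring]
        exact Complex.exp_int_mul_two_pi_mul_I _
      show gmap κ k (Fmod p) = Complex.exp (gmap κ (k+1) p) + κ
      rw [show gmap κ (k+1) p = Complex.log (gmap κ k (Fmod p) - κ)
          + 2 * (Real.pi:ℂ) * Complex.I * ((ofLex p.1 0 : ℤ) : ℂ) from rfl]
      rw [Complex.exp_add, Complex.exp_log hw0, hexp1]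
      ring
    have hL : Tendsto (fun k => gmap κ k (Fmod p)) atTop (𝓝 (g (Fmod p))) := hpt _ hq
    have h1 : Tendsto (fun k => gmap κ (k+1) p) atTop (𝓝 (g p)) :=
      (hpt p hp).comp (tendsto_add_atTop_nat 1)
    have hc : Continuous (Eexp κ) := by
      unfold Eexp; exact Complex.continuous_exp.add continuous_const
    have hR : Tendsto (fun k => Eexp κ (gmap κ (k+1) p)) atTop (𝓝 (Eexp κ (g p))) :=
      (hc.tendsto _).comp h1
    rw [show (fun k => gmap κ k (Fmod p)) = fun k => Eexp κ (gmap κ (k+1) p)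
        from funext hrel] at hL
    exact tendsto_nhds_unique hL hR
  · intro p hp
    set A : ℂ := Complex.log (Zc (Fmod p)) + 2 * Real.pi * Complex.I * ((ofLex p.1 0 : ℤ) : ℂ)
      with hA
    have hper : ∀ k, ‖gmap κ (k+1) p - A‖ ≤ Real.exp (-p.2) * (2 * K + 2 * Real.pi + 4) := by
      intro k
      obtain ⟨ht, ht', hsum, hre, him⟩ := level_facts K hp
      obtain ⟨hdisk, _, _, hfin⟩ := core K hK ht ht' hsum hre him
      have hwk := wk_in_disk κ K hK hκ hp k
      have heq : gmap κ (k+1) p - A =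
          Complex.log (gmap κ k (Fmod p) - κ) - Complex.log (Zc (Fmod p)) := by
        rw [hA]
        rw [show gmap κ (k+1) p = Complex.log (gmap κ k (Fmod p) - κ)
            + 2 * (Real.pi:ℂ) * Complex.I * ((ofLex p.1 0 : ℤ) : ℂ) from rfl]
        ring
      rw [heq]
      exact hfin _ hwk
    have h1 : Tendsto (fun k => gmap κ (k+1) p) atTop (𝓝 (g p)) :=
      (hpt p hp).comp (tendsto_add_atTop_nat 1)
    have h2 : Tendsto (fun k => ‖gmap κ (k+1) p - A‖) atTop (𝓝 ‖g p - A‖) :=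
      (h1.sub_const A).norm
    exact le_of_tendsto h2 (Filter.Eventually.of_forall hper)
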